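/- If G is a finite connected block graph, then μ(G ⊠ P_2) = n(G) + μ(G). -/

import Mathlib

open SimpleGraph

/-- Vertices `x` and `y` are `X`-visible in `G`: some shortest `x,y`-path has
no internal vertex in `X`. -/
def Visible {V : Type*} (G : SimpleGraph V) (X : Set V) (x y : V) : Prop :=
  ∃ p : G.Walk x y, p.length = G.dist x y ∧ ∀ v ∈ p.support, v ∈ X → v = x ∨ v = y

/-- `X` is a mutual-visibility set of `G`: every two vertices of `X` are `X`-visible. -/
def IsMVSet {V : Type*} (G : SimpleGraph V) (X : Set V) : Prop :=
  ∀ x ∈ X, ∀ y ∈ X, Visible G X x y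

/-- `X` is a total mutual-visibility set of `G`: every two vertices of `G` are
`X`-visible. -/
def IsTMVSet {V : Type*} (G : SimpleGraph V) (X : Set V) : Prop :=
  ∀ x y : V, Visible G X x y

/-- The mutual-visibility number of `G`: the maximum cardinality of a
mutual-visibility set. -/
noncomputable def mu {V : Type*} (G : SimpleGraph V) : ℕ :=
  sSup {n | ∃ X : Set V, IsMVSet G X ∧ X.ncard = n}

/-- The total mutual-visibility number of `G`: the maximum cardinality of a total
mutual-visibility set. -/
noncomputable def muT {V : Type*} (G : SimpleGraph V) : ℕ :=
  sSup {n | ∃ X : Set V, IsTMVSet G X ∧ X.ncard = n}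

/-- A feasible total mutual-visibility set: a total mutual-visibility set `S` such that
any two adjacent vertices of `S` have a common neighbor outside `S`. -/
def IsFeasibleTMVSet {V : Type*} (G : SimpleGraph V) (S : Set V) : Prop :=
  IsTMVSet G S ∧ ∀ x ∈ S, ∀ y ∈ S, G.Adj x y → ∃ z ∉ S, G.Adj x z ∧ G.Adj y z

/-- The strong product of two simple graphs. -/
def strongProd {α β : Type*} (G : SimpleGraph α) (H : SimpleGraph β) :
    SimpleGraph (α × β) where
  Adj x y := (G.Adj x.1 y.1 ∧ x.2 = y.2) ∨ (x.1 = y.1 ∧ H.Adj x.2 y.2) ∨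
    (G.Adj x.1 y.1 ∧ H.Adj x.2 y.2)
  symm := ⟨by
    rintro ⟨a, b⟩ ⟨c, d⟩ (⟨h1, h2⟩ | ⟨h1, h2⟩ | ⟨h1, h2⟩)
    · exact Or.inl ⟨h1.symm, h2.symm⟩
    · exact Or.inr (Or.inl ⟨h1.symm, h2.symm⟩)
    · exact Or.inr (Or.inr ⟨h1.symm, h2.symm⟩)⟩
  loopless := ⟨by
    rintro ⟨a, b⟩ (⟨h, _⟩ | ⟨_, h⟩ | ⟨h, _⟩)
    · exact G.irrefl h
    · exact H.irrefl h
    · exact G.irrefl h⟩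

/-- The iterated (associative) strong product of a finite family of graphs:
two tuples are adjacent iff they are distinct and agree or are adjacent in every
coordinate. -/
def strongProdPi {k : ℕ} {V : Fin k → Type*} (G : ∀ i, SimpleGraph (V i)) :
    SimpleGraph (∀ i, V i) where
  Adj x y := x ≠ y ∧ ∀ i, x i = y i ∨ (G i).Adj (x i) (y i)
  symm := ⟨by
    rintro x y ⟨hne, h⟩
    exact ⟨hne.symm, fun i => (h i).imp Eq.symm fun hh => (G i).adj_symm hh⟩⟩
  loopless := ⟨fun x h => h.1 rfl⟩

/-- A universal vertex: adjacent to all other vertices. -/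
def IsUniversal {V : Type*} (G : SimpleGraph V) (v : V) : Prop :=
  ∀ u : V, u ≠ v → G.Adj v u

/-- A cut vertex: its removal disconnects the graph. -/
def IsCutVertex {V : Type*} (G : SimpleGraph V) (v : V) : Prop :=
  ¬ (G.induce ({v}ᶜ : Set V)).Preconnected

/-- An induced path: a path with no chords between its vertices. -/
def IsInducedPath {V : Type*} (G : SimpleGraph V) {u v : V} (p : G.Walk u v) : Prop :=
  p.IsPath ∧ ∀ a b : V, a ∈ p.support → b ∈ p.support → G.Adj a b → s(a, b) ∈ p.edges

/-- A block graph: a connected graph in which every pair of vertices is joined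
by a unique induced path. -/
def IsBlockGraph {V : Type*} (G : SimpleGraph V) : Prop :=
  G.Connected ∧ ∀ u v : V, ∃! p : G.Walk u v, IsInducedPath G p

/-- A convex set of vertices: every shortest path of `G` between two of its
vertices stays inside the set. -/
def IsConvexSet {V : Type*} (G : SimpleGraph V) (A : Set V) : Prop :=
  ∀ x ∈ A, ∀ y ∈ A, ∀ p : G.Walk x y, p.length = G.dist x y → ∀ v ∈ p.support, v ∈ A

/-- A cactus graph: a connected graph in which every edge lies in at most one cycle,
i.e. two cycles sharing an edge have the same edge set. -/
def IsCactus {V : Type*} (G : SimpleGraph V) : Prop :=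
  G.Connected ∧ ∀ (v : V) (p q : G.Walk v v), p.IsCycle → q.IsCycle →
    ∀ e, e ∈ p.edges → e ∈ q.edges → ∀ e', e' ∈ p.edges ↔ e' ∈ q.edges

/-- A cograph: obtained from a single vertex by repeatedly adding twins, i.e. there is
an enumeration of the vertices in which every vertex except the first is, at the
moment of its addition, a (true or false) twin of some earlier vertex in the induced
subgraph on the vertices added so far. -/
def IsCograph {V : Type*} (G : SimpleGraph V) : Prop :=
  ∃ l : List V, l.Nodup ∧ (∀ v : V, v ∈ l) ∧
    ∀ i : Fin l.length, (i : ℕ) ≠ 0 →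
      ∃ j : Fin l.length, (j : ℕ) < (i : ℕ) ∧
        ∀ z ∈ l.take ((i : ℕ) + 1), z ≠ l.get i → z ≠ l.get j →
          (G.Adj (l.get i) z ↔ G.Adj (l.get j) z)

/-- An enabling vertex: a vertex `v` adjacent to every vertex `u` of `G - v` whose
degree in `G - v` is less than `n(G) - 2`. -/
def IsEnabling {V : Type*} [Fintype V] (G : SimpleGraph V) (v : V) : Prop :=
  ∀ u : V, u ≠ v → (G.neighborSet u \ {v}).ncard < Fintype.card V - 2 → G.Adj v u

section Aux

variable {V : Type*} {G : SimpleGraph V}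

/-- There is an `a`-`b` walk avoiding `v`. -/
def Avoid (G : SimpleGraph V) (v a b : V) : Prop :=
  ∃ p : G.Walk a b, v ∉ p.support

lemma Avoid.ne_left {v a b : V} (h : Avoid G v a b) : a ≠ v := by
  obtain ⟨p, hp⟩ := h
  rintro rfl
  exact hp p.start_mem_support

lemma Avoid.ne_right {v a b : V} (h : Avoid G v a b) : b ≠ v := by
  obtain ⟨p, hp⟩ := h
  rintro rfl
  exact hp p.end_mem_support

lemma avoid_refl {v a : V} (h : a ≠ v) : Avoid G v a a :=
  ⟨Walk.nil, by simp [Ne.symm h]⟩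

lemma Avoid.symm {v a b : V} (h : Avoid G v a b) : Avoid G v b a := by
  obtain ⟨p, hp⟩ := h
  exact ⟨p.reverse, by simpa using hp⟩

lemma Avoid.trans {v a b c : V} (h : Avoid G v a b) (h' : Avoid G v b c) : Avoid G v a c := by
  obtain ⟨p, hp⟩ := h
  obtain ⟨q, hq⟩ := h'
  refine ⟨p.append q, ?_⟩
  rw [Walk.mem_support_append_iff]
  rintro (h | h) <;> [exact hp h; exact hq h]

lemma reachable_induce_of_walk {s : Set V} :
    ∀ {a b : V} (p : G.Walk a b), (∀ x ∈ p.support, x ∈ s) → ∀ (ha : a ∈ s) (hb : b ∈ s),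
      (G.induce s).Reachable ⟨a, ha⟩ ⟨b, hb⟩ := by
  intro a b p
  induction p with
  | nil => intro _ _ _; rfl
  | @cons u c b h q ih =>
    intro hp ha hb
    have hc : c ∈ s := hp c (by simp)
    have h1 : (G.induce s).Adj ⟨u, ha⟩ ⟨c, hc⟩ := by
      simp [comap_adj, h]
    exact h1.reachable.trans (ih (fun x hx => hp x (by simp [hx])) hc hb)

lemma walk_of_induce {s : Set V} :
    ∀ {a b : ↥s} (_ : (G.induce s).Walk a b), ∃ q : G.Walk a.1 b.1, ∀ x ∈ q.support, x ∈ s := by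
  intro a b p
  induction p with
  | nil => exact ⟨Walk.nil, by simpa using a.2⟩
  | @cons u c b h q ih =>
    obtain ⟨q', hq'⟩ := ih
    have hadj : G.Adj u.1 c.1 := h
    refine ⟨Walk.cons hadj q', ?_⟩
    intro x hx
    rw [Walk.support_cons, List.mem_cons] at hx
    rcases hx with rfl | hx
    · exact u.2
    · exact hq' x hx

lemma not_cut_avoid {v a b : V} (hv : ¬ IsCutVertex G v) (ha : a ≠ v) (hb : b ≠ v) :
    Avoid G v a b := by
  have hpre := not_not.mp hv
  have ha' : a ∈ ({v}ᶜ : Set V) := by simpa using ha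
  have hb' : b ∈ ({v}ᶜ : Set V) := by simpa using hb
  obtain ⟨p⟩ := hpre ⟨a, ha'⟩ ⟨b, hb'⟩
  obtain ⟨q, hq⟩ := walk_of_induce p
  refine ⟨q, fun hmem => ?_⟩
  simpa using hq v hmem

lemma cut_exists {v : V} (h : IsCutVertex G v) :
    ∃ a b, a ≠ v ∧ b ≠ v ∧ ¬ Avoid G v a b := by
  rw [IsCutVertex, SimpleGraph.Preconnected] at h
  push_neg at h
  obtain ⟨a, b, hab⟩ := h
  have ha : a.1 ≠ v := Set.mem_compl_singleton_iff.mp a.2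
  have hb : b.1 ≠ v := Set.mem_compl_singleton_iff.mp b.2
  refine ⟨a.1, b.1, ha, hb, fun ⟨q, hq⟩ => hab ?_⟩
  have hsup : ∀ x ∈ q.support, x ∈ ({v}ᶜ : Set V) := by
    intro x hx
    simp only [Set.mem_compl_iff, Set.mem_singleton_iff]
    rintro rfl; exact hq hx
  have := reachable_induce_of_walk q hsup a.2 b.2
  simpa using this

lemma exists_shortest_path (h : G.Reachable a b) :
    ∃ p : G.Walk a b, p.IsPath ∧ p.length = G.dist a b := by
  obtain ⟨p, hp⟩ := h.exists_walk_length_eq_dist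
  exact ⟨p, p.isPath_of_length_eq_dist hp, hp⟩

lemma eq_of_mem_take_drop [DecidableEq V] {a b c x : V} {p : G.Walk a b} (hp : p.IsPath)
    (hc : c ∈ p.support)
    (hx1 : x ∈ (p.takeUntil c hc).support) (hx2 : x ∈ (p.dropUntil c hc).support) : x = c := by
  have hnd : ((p.takeUntil c hc).support ++ (p.dropUntil c hc).support.tail).Nodup := by
    rw [← Walk.support_append, Walk.take_spec]
    exact hp.support_nodup
  rw [Walk.support_eq_cons (p.dropUntil c hc), List.mem_cons] at hx2
  rcases hx2 with rfl | hx2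
  · rfl
  · exact absurd hx2 (List.disjoint_of_nodup_append hnd hx1)

lemma nil_isInducedPath {a : V} : IsInducedPath G (Walk.nil : G.Walk a a) := by
  refine ⟨Walk.IsPath.nil, ?_⟩
  intro x y hx hy hadj
  simp only [Walk.support_nil, List.mem_singleton] at hx hy
  subst hx; subst hy
  exact absurd hadj (G.irrefl)

lemma IsInducedPath.dropUntil' [DecidableEq V] {a b c : V} {p : G.Walk a b}
    (hp : IsInducedPath G p) (hc : c ∈ p.support) :
    IsInducedPath G (p.dropUntil c hc) := by
  refine ⟨hp.1.dropUntil hc, ?_⟩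
  intro x y hx hy hadj
  have hxy := hp.2 x y (p.support_dropUntil_subset hc hx) (p.support_dropUntil_subset hc hy) hadj
  have hedges : p.edges = (p.takeUntil c hc).edges ++ (p.dropUntil c hc).edges := by
    conv_lhs => rw [← Walk.take_spec p hc]
    rw [Walk.edges_append]
  rw [hedges, List.mem_append] at hxy
  rcases hxy with h | h
  · exfalso
    have hx' := Walk.fst_mem_support_of_mem_edges _ h
    have hy' := Walk.snd_mem_support_of_mem_edges _ h
    have e1 := eq_of_mem_take_drop hp.1 hc hx' hx
    have e2 := eq_of_mem_take_drop hp.1 hc hy' hy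
    exact hadj.ne (e1.trans e2.symm)
  · exact h

lemma ext_induced [DecidableEq V] {z : V} :
    ∀ (n : ℕ) {a c b : V} (q : G.Walk c b), q.length ≤ n → IsInducedPath G q →
      z ∉ q.support → G.Adj a c → a ≠ z → a ∉ q.support →
      ∃ P : G.Walk a b, IsInducedPath G P ∧ z ∉ P.support := by
  intro n
  induction n using Nat.strong_induction_on with
  | _ n ih =>
    intro a c b q hlen hq hz hac haz ha
    by_cases hy : ∃ y, ∃ (hymem : y ∈ q.support), G.Adj a y ∧ y ≠ c
    · obtain ⟨y, hymem, hay, hyc⟩ := hy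
      have h1 : 1 ≤ (q.takeUntil y hymem).length := by
        by_contra h
        push_neg at h
        exact hyc (Walk.eq_of_length_eq_zero (Nat.lt_one_iff.mp h)).symm
      have hsum : (q.takeUntil y hymem).length + (q.dropUntil y hymem).length = q.length := by
        have := congrArg Walk.length (Walk.take_spec q hymem)
        rwa [Walk.length_append] at this
      refine ih (q.dropUntil y hymem).length (by omega) (q.dropUntil y hymem) le_rfl
        (hq.dropUntil' hymem) (fun h => hz (q.support_dropUntil_subset hymem h)) hay haz
        (fun h => ha (q.support_dropUntil_subset hymem h))
    · push_neg at hy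
      refine ⟨Walk.cons hac q, ⟨hq.1.cons ha, ?_⟩, ?_⟩
      · intro x y hx hyy hadj
        rw [Walk.support_cons, List.mem_cons] at hx hyy
        rw [Walk.edges_cons, List.mem_cons]
        rcases hx with rfl | hx
        · rcases hyy with rfl | hyy
          · exact absurd hadj (G.irrefl)
          · have hyc := hy y hyy hadj
            subst hyc
            exact Or.inl rfl
        · rcases hyy with rfl | hyy
          · have hxc := hy x hx hadj.symm
            subst hxc
            exact Or.inl (Sym2.eq_swap)
          · exact Or.inr (hq.2 x y hx hyy hadj)
      · rw [Walk.support_cons, List.mem_cons]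
        rintro (rfl | h)
        · exact haz rfl
        · exact hz h

lemma exists_induced_avoid [DecidableEq V] {z : V} :
    ∀ {a b : V} (t : G.Walk a b), z ∉ t.support →
      ∃ P : G.Walk a b, IsInducedPath G P ∧ z ∉ P.support := by
  intro a b t
  induction t with
  | nil => intro h; exact ⟨Walk.nil, nil_isInducedPath, h⟩
  | @cons u c b hadj t' ih =>
    intro hz
    rw [Walk.support_cons, List.mem_cons] at hz
    push_neg at hz
    obtain ⟨hza, hzt⟩ := hz
    obtain ⟨q, hq, hzq⟩ := ih hzt
    by_cases ha : u ∈ q.support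
    · exact ⟨q.dropUntil u ha, hq.dropUntil' ha, fun h => hzq (q.support_dropUntil_subset ha h)⟩
    · exact ext_induced q.length q le_rfl hq hzq hadj (fun h => hza h.symm) ha

lemma internal_mem_shortest_is_cut [DecidableEq V] (hG : IsBlockGraph G) {u w z : V}
    (p : G.Walk u w) (hlen : p.length = G.dist u w) (hz : z ∈ p.support)
    (hzu : z ≠ u) (hzw : z ≠ w) : IsCutVertex G z := by
  by_contra hcut
  have hp : p.IsPath := p.isPath_of_length_eq_dist hlen
  -- decompose the second part
  obtain ⟨b, hzb, r, hq2⟩ := Walk.exists_eq_cons_of_ne hzw (p.dropUntil z hz)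
  -- decompose the first part (reversed)
  obtain ⟨a, hza, s', hq1⟩ := Walk.exists_eq_cons_of_ne hzu (p.takeUntil z hz).reverse
  have hsum : (p.takeUntil z hz).length + (p.dropUntil z hz).length = p.length := by
    have := congrArg Walk.length (Walk.take_spec p hz)
    rwa [Walk.length_append] at this
  have hlen1 : (p.takeUntil z hz).length = s'.length + 1 := by
    have := congrArg Walk.length hq1
    rwa [Walk.length_reverse, Walk.length_cons] at this
  have hlen2 : (p.dropUntil z hz).length = r.length + 1 := by
    have := congrArg Walk.length hq2
    rwa [Walk.length_cons] at this
  -- a and b are not adjacent and distinct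
  have hab : ¬ G.Adj a b := by
    intro h
    have hd := SimpleGraph.dist_le (s'.reverse.append (Walk.cons h r))
    rw [Walk.length_append, Walk.length_reverse, Walk.length_cons] at hd
    omega
  have hane : a ≠ b := by
    intro h
    subst h
    have hd := SimpleGraph.dist_le (s'.reverse.append r)
    rw [Walk.length_append, Walk.length_reverse] at hd
    omega
  -- the induced path a - z - b
  have hP1 : IsInducedPath G (Walk.cons hza.symm (Walk.cons hzb Walk.nil)) := by
    constructor
    · rw [Walk.isPath_def]
      simp only [Walk.support_cons, Walk.support_nil]
      refine List.nodup_cons.mpr ⟨?_, List.nodup_cons.mpr ⟨?_, List.nodup_singleton _⟩⟩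
      · simp only [List.mem_cons, List.mem_singleton]
        rintro (rfl | rfl | h)
        · exact hza.ne rfl
        · exact hane rfl
        · exact List.not_mem_nil h
      · simp only [List.mem_singleton]
        rintro rfl
        exact hzb.ne rfl
    · intro x y hx hy hadj
      simp only [Walk.support_cons, Walk.support_nil, List.mem_cons, List.mem_singleton,
        List.not_mem_nil, or_false] at hx hy
      simp only [Walk.edges_cons, Walk.edges_nil, List.mem_cons, List.mem_singleton,
        List.not_mem_nil, or_false]
      rcases hx with rfl | rfl | rfl <;> rcases hy with rfl | rfl | rfl
      · exact absurd hadj (G.irrefl)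
      · exact Or.inl rfl
      · exact absurd hadj hab
      · exact Or.inl Sym2.eq_swap
      · exact absurd hadj (G.irrefl)
      · exact Or.inr rfl
      · exact absurd hadj (hab ∘ Adj.symm)
      · exact Or.inr Sym2.eq_swap
      · exact absurd hadj (G.irrefl)
  -- an induced path from a to b avoiding z
  obtain ⟨t, ht⟩ := not_cut_avoid hcut hza.ne' hzb.ne'
  obtain ⟨P2, hP2, hzP2⟩ := exists_induced_avoid t ht
  obtain ⟨Pu, _, huniq⟩ := hG.2 a b
  have he : (Walk.cons hza.symm (Walk.cons hzb Walk.nil)) = P2 :=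
    (huniq _ hP1).trans (huniq P2 hP2).symm
  apply hzP2
  rw [← he]
  simp

lemma exists_noncut_avoid [Fintype V] [DecidableEq V] (hc : G.Connected) {v w₀ : V}
    (hw : w₀ ≠ v) : ∃ s, Avoid G v s w₀ ∧ ¬ IsCutVertex G s := by
  classical
  let T : Finset V := Finset.univ.filter (fun u => Avoid G v u w₀)
  have hT : T.Nonempty := ⟨w₀, by simp [T, avoid_refl hw]⟩
  obtain ⟨s, hsT, hmax⟩ := T.exists_max_image (fun u => G.dist v u) hT
  have hsav : Avoid G v s w₀ := by simpa [T] using hsT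
  refine ⟨s, hsav, ?_⟩
  intro hcut
  obtain ⟨a, b, hasne, hbsne, hnav⟩ := cut_exists hcut
  have hsv : s ≠ v := hsav.ne_left
  have hu : ∃ u, u ≠ s ∧ ¬ Avoid G s v u := by
    by_cases h1 : Avoid G s v a
    · exact ⟨b, hbsne, fun h2 => hnav (h1.symm.trans h2)⟩
    · exact ⟨a, hasne, h1⟩
  obtain ⟨u, hus, hnsu⟩ := hu
  obtain ⟨p, hpath, hplen⟩ := exists_shortest_path (hc v u)
  have hsmem : s ∈ p.support := by
    by_contra h
    exact hnsu ⟨p, h⟩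
  have hsum : (p.takeUntil s hsmem).length + (p.dropUntil s hsmem).length = p.length := by
    have := congrArg Walk.length (Walk.take_spec p hsmem)
    rwa [Walk.length_append] at this
  have h1 : G.dist v s ≤ (p.takeUntil s hsmem).length := SimpleGraph.dist_le _
  have h2 : 1 ≤ (p.dropUntil s hsmem).length := by
    by_contra h
    push_neg at h
    exact hus (Walk.eq_of_length_eq_zero (Nat.lt_one_iff.mp h)).symm
  have hvp : v ∉ (p.dropUntil s hsmem).support := by
    intro hmem
    exact hsv (eq_of_mem_take_drop hpath hsmem (p.takeUntil s hsmem).start_mem_support hmem).symm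
  have huT : u ∈ T := by
    have h3 : Avoid G v u s := ⟨(p.dropUntil s hsmem).reverse, by simpa using hvp⟩
    simp only [T, Finset.mem_filter, Finset.mem_univ, true_and]
    exact h3.trans hsav
  have := hmax u huT
  omega

lemma mv_pair_avoid {X : Set V} (hX : IsMVSet G X) {v x y : V} (hv : v ∈ X) (hx : x ∈ X)
    (hy : y ∈ X) (hxv : x ≠ v) (hyv : y ≠ v) : Avoid G v x y := by
  obtain ⟨p, _, hsup⟩ := hX x hx y hy
  refine ⟨p, fun hmem => ?_⟩
  rcases hsup v hmem hv with rfl | rfl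
  · exact hxv rfl
  · exact hyv rfl

lemma key_lemma [Fintype V] [DecidableEq V] (hc : G.Connected) {X : Set V} (hX : IsMVSet G X)
    {v : V} (hcut : IsCutVertex G v) (hvX : v ∈ X) :
    ∃ s, ¬ IsCutVertex G s ∧ s ∉ X ∧ ∀ x ∈ X, x ≠ v → ¬ Avoid G v s x := by
  obtain ⟨a, b, hav, hbv, hnab⟩ := cut_exists hcut
  have hw : ∃ w₀, w₀ ≠ v ∧ ∀ x ∈ X, x ≠ v → ¬ Avoid G v w₀ x := by
    by_cases h1 : ∃ x, x ∈ X ∧ x ≠ v ∧ Avoid G v a x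
    · refine ⟨b, hbv, fun x hx hxv h2 => ?_⟩
      obtain ⟨x', hx', hx'v, h3⟩ := h1
      exact hnab (h3.trans ((mv_pair_avoid hX hvX hx' hx hx'v hxv).trans h2.symm))
    · push_neg at h1
      exact ⟨a, hav, fun x hx hxv h2 => h1 x hx hxv h2⟩
  obtain ⟨w₀, hw₀v, hw₀⟩ := hw
  obtain ⟨s, hsav, hsnc⟩ := exists_noncut_avoid hc hw₀v
  refine ⟨s, hsnc, ?_, ?_⟩
  · intro hsX
    exact hw₀ s hsX hsav.ne_left hsav.symm
  · intro x hx hxv h2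
    exact hw₀ x hx hxv (hsav.symm.trans h2)

lemma no_collision [DecidableEq V] (hc : G.Connected) {v v' s : V} (hvv' : v ≠ v')
    (h1 : ¬ Avoid G v s v') (h2 : ¬ Avoid G v' s v) : False := by
  obtain ⟨p0⟩ := hc s v
  set p := p0.bypass with hp
  have hpath : p.IsPath := p0.bypass_isPath
  have hv'mem : v' ∈ p.support := by
    by_contra h
    exact h2 ⟨p, h⟩
  have hvtake : v ∉ (p.takeUntil v' hv'mem).support := by
    intro hmem
    exact hvv' (eq_of_mem_take_drop hpath hv'mem hmem (p.dropUntil v' hv'mem).end_mem_support)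
  exact h1 ⟨p.takeUntil v' hv'mem, hvtake⟩

lemma mv_card_le [Fintype V] (hc : G.Connected) {X : Set V} (hX : IsMVSet G X) :
    X.ncard ≤ {v : V | ¬ IsCutVertex G v}.ncard := by
  classical
  set C : Set V := {v : V | IsCutVertex G v} with hC
  have hkey : ∀ v, (IsCutVertex G v ∧ v ∈ X) →
      ∃ s, ¬ IsCutVertex G s ∧ s ∉ X ∧ ∀ x ∈ X, x ≠ v → ¬ Avoid G v s x :=
    fun v h => key_lemma hc hX h.1 h.2
  choose! f hf1 hf2 hf3 using hkey
  set φ : V → V := fun v => if IsCutVertex G v ∧ v ∈ X then f v else v with hφ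
  have hφ1 : ∀ v, IsCutVertex G v → v ∈ X → φ v = f v := by
    intro v h1 h2
    simp only [hφ]
    exact if_pos ⟨h1, h2⟩
  have hφ2 : ∀ v, v ∉ X → φ v = v := by
    intro v h2
    simp only [hφ]
    exact if_neg (fun hh => h2 hh.2)
  have hmaps : ∀ v ∈ C, φ v ∈ Xᶜ := by
    intro v hv
    by_cases hvX : v ∈ X
    · rw [hφ1 v hv hvX]
      exact hf2 v ⟨hv, hvX⟩
    · rw [hφ2 v hvX]
      exact hvX
  have hinj : Set.InjOn φ C := by
    intro v hv v' hv' heq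
    by_contra hne
    have hv : IsCutVertex G v := hv
    have hv' : IsCutVertex G v' := hv'
    by_cases hvX : v ∈ X <;> by_cases hv'X : v' ∈ X
    · rw [hφ1 v hv hvX, hφ1 v' hv' hv'X] at heq
      refine no_collision (s := f v) hc hne ?_ ?_
      · exact hf3 v ⟨hv, hvX⟩ v' hv'X (fun h => hne h.symm)
      · rw [heq]
        exact hf3 v' ⟨hv', hv'X⟩ v hvX hne
    · rw [hφ1 v hv hvX, hφ2 v' hv'X] at heq
      exact hf1 v ⟨hv, hvX⟩ (heq ▸ hv')
    · rw [hφ2 v hvX, hφ1 v' hv' hv'X] at heq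
      exact hf1 v' ⟨hv', hv'X⟩ (heq ▸ hv)
    · rw [hφ2 v hvX, hφ2 v' hv'X] at heq
      exact hne heq
  have h1 : C.ncard ≤ Xᶜ.ncard :=
    Set.ncard_le_ncard_of_injOn φ hmaps hinj (Set.toFinite _)
  have h2 : X.ncard + Xᶜ.ncard = Nat.card V := Set.ncard_add_ncard_compl X
  have h3 : C.ncard + Cᶜ.ncard = Nat.card V := Set.ncard_add_ncard_compl C
  have h4 : {v : V | ¬ IsCutVertex G v} = Cᶜ := by
    ext w
    simp [hC]
  rw [h4]
  omega

lemma noncut_tmv [DecidableEq V] (hG : IsBlockGraph G) :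
    IsTMVSet G {v : V | ¬ IsCutVertex G v} := by
  intro x y
  obtain ⟨p, _, hplen⟩ := exists_shortest_path (hG.1 x y)
  refine ⟨p, hplen, fun z hz hzX => ?_⟩
  by_contra h
  push_neg at h
  exact hzX (internal_mem_shortest_is_cut hG p hplen hz h.1 h.2)

lemma strongProd_adj {α β : Type*} {G : SimpleGraph α} {H : SimpleGraph β} {x y : α × β} :
    (strongProd G H).Adj x y ↔ ((G.Adj x.1 y.1 ∧ x.2 = y.2) ∨ (x.1 = y.1 ∧ H.Adj x.2 y.2) ∨
      (G.Adj x.1 y.1 ∧ H.Adj x.2 y.2)) := Iff.rfl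

lemma fin2cases : ∀ i : Fin 2, i = 0 ∨ i = 1 := by decide

lemma pg2_adj {i j : Fin 2} (h : i ≠ j) : (SimpleGraph.pathGraph 2).Adj i j := by
  rw [SimpleGraph.pathGraph_adj]
  have h1 : i.val ≠ j.val := fun hh => h (Fin.ext hh)
  have h2 := i.isLt
  have h3 := j.isLt
  omega

lemma sp_adj {a b : V} (h : G.Adj a b) (i j : Fin 2) :
    (strongProd G (SimpleGraph.pathGraph 2)).Adj (a, i) (b, j) := by
  rw [strongProd_adj]
  by_cases hij : i = j
  · exact Or.inl ⟨h, hij⟩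
  · exact Or.inr (Or.inr ⟨h, pg2_adj hij⟩)

lemma sp_adj_snd {a : V} {i j : Fin 2} (h : i ≠ j) :
    (strongProd G (SimpleGraph.pathGraph 2)).Adj (a, i) (a, j) := by
  rw [strongProd_adj]
  exact Or.inr (Or.inl ⟨rfl, pg2_adj h⟩)

lemma pair_fst_mem {α β : Type*} (u : α × β) (l : List (α × β)) (h : u ∈ l) :
    ∃ i, (u.1, i) ∈ l := ⟨u.2, by simpa⟩

lemma proj_walk : ∀ {x y : V × Fin 2} (p : (strongProd G (SimpleGraph.pathGraph 2)).Walk x y),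
    ∃ q : G.Walk x.1 y.1, q.length ≤ p.length ∧ ∀ h ∈ q.support, ∃ i, (h, i) ∈ p.support := by
  intro x y p
  induction p with
  | nil =>
    refine ⟨Walk.nil, le_rfl, ?_⟩
    intro h hh
    simp only [Walk.support_nil, List.mem_singleton] at hh
    subst hh
    exact pair_fst_mem _ _ (Walk.start_mem_support _)
  | @cons u c y hadj p' ih =>
    obtain ⟨q', hlen, hsup⟩ := ih
    rw [strongProd_adj] at hadj
    have hcase : G.Adj u.1 c.1 ∨ u.1 = c.1 := by
      rcases hadj with ⟨h1, _⟩ | ⟨h1, _⟩ | ⟨h1, _⟩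
      · exact Or.inl h1
      · exact Or.inr h1
      · exact Or.inl h1
    rcases hcase with h1 | h1
    · refine ⟨Walk.cons h1 q', by simp only [Walk.length_cons]; omega, ?_⟩
      intro h hh
      rw [Walk.support_cons, List.mem_cons] at hh
      rcases hh with rfl | hh
      · exact pair_fst_mem _ _ (Walk.start_mem_support _)
      · obtain ⟨i, hi⟩ := hsup h hh
        exact ⟨i, by simp [hi]⟩
    · refine ⟨q'.copy h1.symm rfl, by simp only [Walk.length_copy, Walk.length_cons]; omega, ?_⟩
      intro h hh
      rw [Walk.support_copy] at hh
      obtain ⟨i, hi⟩ := hsup h hh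
      exact ⟨i, by simp [hi]⟩

lemma lift1 : ∀ {a b : V} (q : G.Walk a b), q.IsPath → 1 ≤ q.length → ∀ (j : Fin 2),
    ∃ p : (strongProd G (SimpleGraph.pathGraph 2)).Walk (a, 1) (b, j), p.length = q.length ∧
      ∀ z ∈ p.support, z = (b, j) ∨ (z.2 = 1 ∧ z.1 ∈ q.support ∧ z.1 ≠ b) := by
  intro a b q
  induction q with
  | nil => intro _ h; simp at h
  | @cons u c b h q' ih =>
    intro hq _ j
    cases q' with
    | nil =>
      refine ⟨Walk.cons (sp_adj h 1 j) Walk.nil, by simp, ?_⟩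
      intro z hz
      simp only [Walk.support_cons, Walk.support_nil, List.mem_cons, List.mem_singleton,
        List.not_mem_nil, or_false] at hz
      rcases hz with rfl | rfl
      · exact Or.inr ⟨rfl, by simp, h.ne⟩
      · exact Or.inl rfl
    | cons h2 q'' =>
      obtain ⟨p', hp'len, hp'sup⟩ := ih hq.of_cons (by simp) j
      refine ⟨Walk.cons (sp_adj h 1 1) p', by simp [hp'len], ?_⟩
      have hub : u ∉ (Walk.cons h2 q'').support := (Walk.cons_isPath_iff _ _).mp hq |>.2
      intro z hz
      rw [Walk.support_cons, List.mem_cons] at hz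
      rcases hz with rfl | hz
      · refine Or.inr ⟨rfl, by simp, ?_⟩
        intro hub2
        exact hub (hub2 ▸ (Walk.cons h2 q'').end_mem_support)
      · rcases hp'sup z hz with rfl | ⟨hz2, hzq, hzb⟩
        · exact Or.inl rfl
        · exact Or.inr ⟨hz2, by rw [Walk.support_cons]; exact List.mem_cons_of_mem _ hzq, hzb⟩

lemma lift_walk {g g' : V} (q : G.Walk g g') (hq : q.IsPath) (h1 : 1 ≤ q.length) (i j : Fin 2) :
    ∃ p : (strongProd G (SimpleGraph.pathGraph 2)).Walk (g, i) (g', j), p.length = q.length ∧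
      ∀ z ∈ p.support, z = (g, i) ∨ z = (g', j) ∨
        (z.2 = 1 ∧ z.1 ∈ q.support ∧ z.1 ≠ g ∧ z.1 ≠ g') := by
  cases q with
  | nil => simp at h1
  | @cons u c b h q' =>
    cases q' with
    | nil =>
      refine ⟨Walk.cons (sp_adj h i j) Walk.nil, by simp, ?_⟩
      intro z hz
      simp only [Walk.support_cons, Walk.support_nil, List.mem_cons, List.mem_singleton,
        List.not_mem_nil, or_false] at hz
      rcases hz with rfl | rfl
      · exact Or.inl rfl
      · exact Or.inr (Or.inl rfl)
    | cons h2 q'' =>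
      obtain ⟨p', hp'len, hp'sup⟩ := lift1 (Walk.cons h2 q'') hq.of_cons (by simp) j
      refine ⟨Walk.cons (sp_adj h i 1) p', by simp [hp'len], ?_⟩
      have hub : g ∉ (Walk.cons h2 q'').support := (Walk.cons_isPath_iff _ _).mp hq |>.2
      intro z hz
      rw [Walk.support_cons, List.mem_cons] at hz
      rcases hz with rfl | hz
      · exact Or.inl rfl
      · rcases hp'sup z hz with rfl | ⟨hz2, hzq, hzb⟩
        · exact Or.inr (Or.inl rfl)
        · refine Or.inr (Or.inr ⟨hz2, by rw [Walk.support_cons]; exact List.mem_cons_of_mem _ hzq, ?_, hzb⟩)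
          intro hzg
          exact hub (hzg ▸ hzq)

lemma sp_dist (hc : G.Connected) {g g' : V} (hne : g ≠ g') (i j : Fin 2) :
    (strongProd G (SimpleGraph.pathGraph 2)).dist (g, i) (g', j) = G.dist g g' := by
  obtain ⟨q, hqpath, hqlen⟩ := exists_shortest_path (hc.preconnected g g')
  have hq1 : 1 ≤ q.length := by
    rw [hqlen]
    exact (hc.preconnected g g').pos_dist_of_ne hne
  obtain ⟨p, hplen, _⟩ := lift_walk q hqpath hq1 i j
  refine le_antisymm (by rw [← hqlen, ← hplen]; exact SimpleGraph.dist_le p) ?_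
  have hreach : (strongProd G (SimpleGraph.pathGraph 2)).Reachable (g, i) (g', j) := ⟨p⟩
  obtain ⟨w, hw⟩ := hreach.exists_walk_length_eq_dist
  obtain ⟨q2, hq2len, _⟩ := proj_walk w
  have h3 : G.dist g g' ≤ q2.length := SimpleGraph.dist_le q2
  omega

lemma mv_set_nonempty {W : Type*} (H : SimpleGraph W) :
    {n | ∃ X : Set W, IsMVSet H X ∧ X.ncard = n}.Nonempty :=
  ⟨0, ∅, fun x hx => absurd hx (Set.notMem_empty x), Set.ncard_empty _⟩

lemma mv_set_bdd {W : Type*} [Fintype W] (H : SimpleGraph W) :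
    BddAbove {n | ∃ X : Set W, IsMVSet H X ∧ X.ncard = n} := by
  refine ⟨Fintype.card W, ?_⟩
  rintro n ⟨X, _, rfl⟩
  have := Set.ncard_le_ncard (Set.subset_univ X) (Set.toFinite _)
  rwa [Set.ncard_univ, Nat.card_eq_fintype_card] at this

end Aux

theorem stmt_16 {V : Type*} [Fintype V] (G : SimpleGraph V) (hG : IsBlockGraph G) :
    mu (strongProd G (SimpleGraph.pathGraph 2)) = Fintype.card V + mu G := by
  classical
  set X0 : Set V := {v : V | ¬ IsCutVertex G v} with hX0
  have hX0tmv : IsTMVSet G X0 := noncut_tmv hG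
  have hX0mv : IsMVSet G X0 := fun x _ y _ => hX0tmv x y
  have hmuG : mu G = X0.ncard := by
    refine le_antisymm ?_ ?_
    · refine csSup_le (mv_set_nonempty G) ?_
      rintro n ⟨X, hX, rfl⟩
      exact mv_card_le hG.1 hX
    · exact le_csSup (mv_set_bdd G) ⟨X0, hX0mv, rfl⟩
  -- the upper bound
  have hupper : ∀ T : Set (V × Fin 2), IsMVSet (strongProd G (SimpleGraph.pathGraph 2)) T →
      T.ncard ≤ Fintype.card V + mu G := by
    intro T hT
    set T0 : Set V := {g : V | (g, (0 : Fin 2)) ∈ T} with hT0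
    set T1 : Set V := {g : V | (g, (1 : Fin 2)) ∈ T} with hT1
    have hA : IsMVSet G (T0 ∩ T1) := by
      rintro g ⟨hg0, hg1⟩ g' ⟨hg'0, hg'1⟩
      by_cases hgg : g = g'
      · subst hgg
        exact ⟨Walk.nil, by simp [SimpleGraph.dist_self], fun v hv _ => Or.inl (by simpa using hv)⟩
      · obtain ⟨p, hplen, hpsup⟩ := hT (g, 0) hg0 (g', 1) hg'1
        obtain ⟨q, hqlen, hqsup⟩ := proj_walk p
        have hdq : q.length = G.dist g g' := by
          refine le_antisymm ?_ (SimpleGraph.dist_le q)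
          calc q.length ≤ p.length := hqlen
            _ = _ := hplen.trans (sp_dist hG.1 hgg 0 1)
        refine ⟨q, hdq, ?_⟩
        intro h hh hhA
        obtain ⟨i, hi⟩ := hqsup h hh
        have hiT : (h, i) ∈ T := by
          rcases fin2cases i with rfl | rfl
          · exact hhA.1
          · exact hhA.2
        rcases hpsup (h, i) hi hiT with h1 | h1
        · exact Or.inl (congrArg Prod.fst h1)
        · exact Or.inr (congrArg Prod.fst h1)
    have inj0 : Function.Injective (fun g : V => (g, (0 : Fin 2))) :=
      fun a b h => congrArg Prod.fst h
    have inj1 : Function.Injective (fun g : V => (g, (1 : Fin 2))) :=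
      fun a b h => congrArg Prod.fst h
    have hTeq : T = (fun g => (g, (0 : Fin 2))) '' T0 ∪ (fun g => (g, (1 : Fin 2))) '' T1 := by
      ext ⟨g, i⟩
      simp only [Set.mem_union, Set.mem_image, hT0, hT1, Set.mem_setOf_eq]
      constructor
      · intro h
        rcases fin2cases i with rfl | rfl
        · exact Or.inl ⟨g, h, rfl⟩
        · exact Or.inr ⟨g, h, rfl⟩
      · rintro (⟨g', hg', he⟩ | ⟨g', hg', he⟩) <;>
          (rw [Prod.ext_iff] at he; obtain ⟨he1, he2⟩ := he;
            simp only at he1 he2; subst he1; subst he2) <;> exact hg'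
    have hdisj : Disjoint ((fun g : V => (g, (0 : Fin 2))) '' T0)
        ((fun g : V => (g, (1 : Fin 2))) '' T1) := by
      rw [Set.disjoint_left]
      rintro z ⟨g, _, rfl⟩ ⟨g', _, hz⟩
      have h2 := congrArg Prod.snd hz
      simp only at h2
      exact absurd h2 (by decide)
    have hc1 : T.ncard = T0.ncard + T1.ncard := by
      rw [hTeq, Set.ncard_union_eq hdisj (Set.toFinite _) (Set.toFinite _),
        Set.ncard_image_of_injective _ inj0, Set.ncard_image_of_injective _ inj1]
    have hc2 : T0.ncard + T1.ncard = (T0 ∪ T1).ncard + (T0 ∩ T1).ncard :=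
      (Set.ncard_union_add_ncard_inter T0 T1 (Set.toFinite _) (Set.toFinite _)).symm
    have hc3 : (T0 ∪ T1).ncard ≤ Fintype.card V := by
      have := Set.ncard_le_ncard (Set.subset_univ (T0 ∪ T1)) (Set.toFinite _)
      rwa [Set.ncard_univ, Nat.card_eq_fintype_card] at this
    have hc4 : (T0 ∩ T1).ncard ≤ mu G := le_csSup (mv_set_bdd G) ⟨_, hA, rfl⟩
    omega
  -- the lower-bound witness set
  set S : Set (V × Fin 2) := (fun g => (g, (0 : Fin 2))) '' Set.univ ∪
      (fun g => (g, (1 : Fin 2))) '' X0 with hS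
  have hSmem : ∀ z : V × Fin 2, z ∈ S → (z.2 = 0 ∨ (¬ IsCutVertex G z.1 ∧ z.2 = 1)) := by
    rintro z (⟨g, _, rfl⟩ | ⟨g, hg, rfl⟩)
    · exact Or.inl rfl
    · exact Or.inr ⟨hg, rfl⟩
  have hScard : S.ncard = Fintype.card V + X0.ncard := by
    have hdisj : Disjoint ((fun g : V => (g, (0 : Fin 2))) '' Set.univ)
        ((fun g : V => (g, (1 : Fin 2))) '' X0) := by
      rw [Set.disjoint_left]
      rintro z ⟨g, _, rfl⟩ ⟨g', _, hz⟩
      have h2 := congrArg Prod.snd hz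
      simp only at h2
      exact absurd h2 (by decide)
    rw [hS, Set.ncard_union_eq hdisj (Set.toFinite _) (Set.toFinite _),
      Set.ncard_image_of_injective _ (fun a b h => congrArg Prod.fst h),
      Set.ncard_image_of_injective _ (fun a b h => congrArg Prod.fst h),
      Set.ncard_univ, Nat.card_eq_fintype_card]
  have hSmv : IsMVSet (strongProd G (SimpleGraph.pathGraph 2)) S := by
    rintro ⟨x1, x2⟩ hx ⟨y1, y2⟩ hy
    by_cases hxy1 : x1 = y1
    · subst hxy1
      by_cases hxy2 : x2 = y2
      · subst hxy2
        exact ⟨Walk.nil, by simp [SimpleGraph.dist_self], fun v hv _ => Or.inl (by simpa using hv)⟩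
      · have hadj := sp_adj_snd (G := G) (a := x1) hxy2
        refine ⟨Walk.cons hadj Walk.nil, ?_, ?_⟩
        · have hd1 : (strongProd G (SimpleGraph.pathGraph 2)).dist (x1, x2) (x1, y2) ≤ 1 := by
            simpa using SimpleGraph.dist_le (Walk.cons hadj Walk.nil)
          have hne : (x1, x2) ≠ (x1, y2) := fun h => hxy2 (congrArg Prod.snd h)
          have h0 := hadj.reachable.pos_dist_of_ne hne
          simp only [Walk.length_cons, Walk.length_nil]
          omega
        · intro v hv _
          simpa using hv
    · obtain ⟨q, hqpath, hqlen⟩ := exists_shortest_path (hG.1.preconnected x1 y1)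
      have hq1 : 1 ≤ q.length := by
        rw [hqlen]
        exact (hG.1.preconnected x1 y1).pos_dist_of_ne hxy1
      obtain ⟨p, hplen, hpsup⟩ := lift_walk q hqpath hq1 x2 y2
      refine ⟨p, ?_, ?_⟩
      · rw [hplen, sp_dist hG.1 hxy1, hqlen]
      · rintro z hz hzS
        rcases hpsup z hz with rfl | rfl | ⟨hz2, hzq, hzg, hzg'⟩
        · exact Or.inl rfl
        · exact Or.inr rfl
        · exfalso
          have hcut := internal_mem_shortest_is_cut hG q hqlen hzq hzg hzg'
          rcases hSmem z hzS with h0 | ⟨hnc, _⟩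
          · rw [hz2] at h0
            exact absurd h0 (by decide)
          · exact hnc hcut
  refine le_antisymm ?_ ?_
  · refine csSup_le (mv_set_nonempty _) ?_
    rintro n ⟨T, hT, rfl⟩
    exact hupper T hT
  · rw [hmuG, ← hScard]
    exact le_csSup (mv_set_bdd _) ⟨S, hSmv, rfl⟩
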